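/- Under the point-line duality sending a point (a,b) to the line {a x + b y = 1}, the dual curve of the Kepler orbit {a₀ x + b₀ y + c₀√(x²+y²) = 1} (c₀ > 0, the set of (a,b) such that the line a x + b y = 1 is tangent to the orbit) is contained in the circle of radius c₀ centered at (a₀, b₀) in the ab-plane. -/
import Mathlib


/-- If the line `a x + b y = 1` is tangent to the Kepler orbit
`a₀ x + b₀ y + c₀ √(x²+y²) = 1` (c₀ > 0) — i.e. it passes through a point of
the orbit and is parallel to the tangent line there (its normal `(a,b)` is
proportional to the gradient of the defining function) — then `(a,b)` lies on
the circle of radius `c₀` centered at `(a₀,b₀)`. -/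
theorem dual_of_kepler_orbit_is_circle
    (a₀ b₀ c₀ a b : ℝ) (hc₀ : 0 < c₀) (p : ℝ × ℝ) (hp : p ≠ 0)
    (hon : a₀ * p.1 + b₀ * p.2 + c₀ * Real.sqrt (p.1 ^ 2 + p.2 ^ 2) = 1)
    (hline : a * p.1 + b * p.2 = 1)
    (htang : ∃ t : ℝ,
        a = t * (a₀ + c₀ * p.1 / Real.sqrt (p.1 ^ 2 + p.2 ^ 2)) ∧
        b = t * (b₀ + c₀ * p.2 / Real.sqrt (p.1 ^ 2 + p.2 ^ 2))) :
    (a - a₀) ^ 2 + (b - b₀) ^ 2 = c₀ ^ 2 := by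
  obtain ⟨t, ha, hb⟩ := htang
  set x := p.1
  set y := p.2
  set r := Real.sqrt (x ^ 2 + y ^ 2) with hrdef
  have hxy : 0 < x ^ 2 + y ^ 2 := by
    by_contra h
    push_neg at h
    have hx : x = 0 := by nlinarith [sq_nonneg x, sq_nonneg y]
    have hy : y = 0 := by nlinarith [sq_nonneg x, sq_nonneg y]
    exact hp (Prod.ext hx hy)
  have hr : 0 < r := Real.sqrt_pos.mpr hxy
  have hr2 : r ^ 2 = x ^ 2 + y ^ 2 := Real.sq_sqrt hxy.le
  have hrne : r ≠ 0 := hr.ne'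
  -- substitute into the line equation
  have ht : t * (a₀ * x + b₀ * y + c₀ * r) = 1 := by
    have h1 : t * (a₀ * x + b₀ * y + c₀ * r) * r = 1 * r := by
      rw [ha, hb] at hline
      field_simp at hline
      ring_nf
      ring_nf at hline
      linear_combination hline + t * c₀ * hr2
    exact mul_right_cancel₀ hrne h1
  have ht1 : t = 1 := by rw [hon] at ht; linarith
  subst ht1
  rw [ha, hb]
  field_simp
  linear_combination -c₀ ^ 2 * hr2
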